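/- Let (x, p) be a solution to the Eisenberg–Gale program with budgets e such that x is envy-free, and let S be a weakly connected component of I(x) on which all budgets are equal, such that the restriction of I(x) to S is clique acyclic with a witnessing partition into cliques in which any two agents of the same clique have identical bundles, and such that I(x) restricted to S has at least one edge between distinct cliques of this partition. Then there exist positive budgets e' with e'_i = e_i for all i ∉ S and a fractional allocation x' with x'_i = x_i for all i ∉ S such that: (x', p) is a solution to the Eisenberg–Gale program with budgets e'; x' is envy-free; every edge of I(x') is an edge of I(x), and I(x') has strictly fewer edges than I(x); and the restriction of I(x') to S has at least two weakly connected components, on each of which the budgets e' are constant. -/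

import Mathlib

open Finset

/-- `X` is a fractional allocation of `m` divisible items to `n` agents. -/
def IsAlloc {n m : ℕ} (X : Fin n → Fin m → ℝ) : Prop :=
  (∀ i j, X i j ∈ Set.Icc (0 : ℝ) 1) ∧ ∀ j, ∑ i, X i j = 1

/-- Agent `i`'s additive value for a fractional bundle `y`. -/
def val {n m : ℕ} (v : Fin n → Fin m → ℝ) (i : Fin n) (y : Fin m → ℝ) : ℝ :=
  ∑ k, v i k * y k

/-- `X` is envy-free under valuations `v`. -/
def EnvyFree {n m : ℕ} (v : Fin n → Fin m → ℝ) (X : Fin n → Fin m → ℝ) : Prop :=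
  ∀ i j, val v i (X j) ≤ val v i (X i)

/-- The indifference graph `I(X)` has an edge from `i` to `j` iff `i ≠ j` and
`i` is indifferent between its own bundle and `j`'s bundle. -/
def IndifEdge {n m : ℕ} (v : Fin n → Fin m → ℝ) (X : Fin n → Fin m → ℝ)
    (i j : Fin n) : Prop :=
  i ≠ j ∧ val v i (X i) = val v i (X j)

/-- `(x, p)` is a solution to the Eisenberg–Gale program with budgets `e`:
`e` and `p` are positive, `x` is a fractional allocation giving every agent positive
utility, and the KKT conditions hold. -/
def EGSolution {n m : ℕ} (v : Fin n → Fin m → ℝ) (e : Fin n → ℝ) (p : Fin m → ℝ)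
    (x : Fin n → Fin m → ℝ) : Prop :=
  (∀ i, 0 < e i) ∧ (∀ j, 0 < p j) ∧ IsAlloc x ∧ (∀ i, 0 < val v i (x i)) ∧
  (∀ j, ∑ i, x i j = 1) ∧
  (∀ i j, v i j / p j ≤ val v i (x i) / e i) ∧
  (∀ i j, 0 < x i j → v i j / p j = val v i (x i) / e i)

/-- One step in the underlying undirected graph of `I(X)`. -/
def UndirStep {n m : ℕ} (v : Fin n → Fin m → ℝ) (X : Fin n → Fin m → ℝ)
    (i j : Fin n) : Prop :=
  IndifEdge v X i j ∨ IndifEdge v X j i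

/-- `S` is a weakly connected component of the indifference graph `I(X)`:
the set of vertices reachable from some vertex in the underlying undirected graph. -/
def IsWCC {n m : ℕ} (v : Fin n → Fin m → ℝ) (X : Fin n → Fin m → ℝ)
    (S : Set (Fin n)) : Prop :=
  ∃ i₀, S = {j | Relation.ReflTransGen (UndirStep v X) i₀ j}

/-- The directed graph with edge relation `E`, restricted to the vertex set `S`, is
clique acyclic with witnessing partition (labelling) `c`: agents of `S` with the same
label form a clique, and every directed cycle inside `S` stays within one label
class. -/
def CliqueAcyclicOn {n : ℕ} (E : Fin n → Fin n → Prop) (S : Set (Fin n))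
    (c : Fin n → ℕ) : Prop :=
  (∀ i ∈ S, ∀ j ∈ S, i ≠ j → c i = c j → E i j) ∧
  (∀ (k : ℕ) (cyc : Fin (k + 1) → Fin n), (∀ t, cyc t ∈ S) →
    (∀ t, E (cyc t) (cyc (t + 1))) → ∀ t t', c (cyc t) = c (cyc t'))


/-- One step in the underlying undirected graph of `I(X)` restricted to `S`. -/
def RestrStep {n m : ℕ} (v : Fin n → Fin m → ℝ) (X : Fin n → Fin m → ℝ)
    (S : Set (Fin n)) (i j : Fin n) : Prop :=
  i ∈ S ∧ j ∈ S ∧ (IndifEdge v X i j ∨ IndifEdge v X j i)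

section AuxEG

lemma flow_of_rel {α : Type*} [Fintype α] [DecidableEq α] {E : α → α → Prop} {i j : α}
    (h : Relation.ReflTransGen E i j) :
    ∃ F : α → α → ℝ, (∀ a b, 0 ≤ F a b) ∧ (∀ a b, ¬ E a b → F a b = 0) ∧
      ∀ a, ((∑ b, F a b) - (∑ b, F b a)) =
        (if a = i then (1:ℝ) else 0) - (if a = j then 1 else 0) := by
  induction h with
  | refl => exact ⟨0, by simp, by simp, by simp⟩
  | @tail b c hab hbc ih =>
    obtain ⟨F, h1, h2, h3⟩ := ih
    refine ⟨fun a b' => F a b' + if a = b ∧ b' = c then 1 else 0, ?_, ?_, ?_⟩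
    · intro a b'
      have := h1 a b'
      dsimp only
      split <;> linarith
    · intro a b' hnE
      dsimp only
      rw [h2 a b' hnE, if_neg ?_, add_zero]
      rintro ⟨rfl, rfl⟩; exact hnE hbc
    · intro a
      dsimp only
      have e1 : (∑ b', (F a b' + if a = b ∧ b' = c then (1:ℝ) else 0)) =
          (∑ b', F a b') + (if a = b then 1 else 0) := by
        rw [Finset.sum_add_distrib]
        congr 1
        by_cases hab' : a = b
        · simp [hab']
        · simp [hab']
      have e2 : (∑ b', (F b' a + if b' = b ∧ a = c then (1:ℝ) else 0)) =
          (∑ b', F b' a) + (if a = c then 1 else 0) := by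
        rw [Finset.sum_add_distrib]
        congr 1
        by_cases hac : a = c
        · simp [hac]
        · simp [hac]
      rw [e1, e2]
      have h3a := h3 a
      by_cases hb : a = b <;> by_cases hc : a = c <;>
        simp [hb, hc] at h3a ⊢ <;> linarith

lemma c_eq_of_cycle {n : ℕ} {E : Fin n → Fin n → Prop} {S : Set (Fin n)} {c : Fin n → ℕ}
    (hca2 : ∀ (k : ℕ) (cyc : Fin (k + 1) → Fin n), (∀ t, cyc t ∈ S) →
      (∀ t, E (cyc t) (cyc (t + 1))) → ∀ t t', c (cyc t) = c (cyc t'))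
    {R : Fin n → Fin n → Prop} (hR : ∀ a b, R a b → a ∈ S ∧ b ∈ S ∧ E a b)
    {i j : Fin n} (hij : Relation.ReflTransGen R i j) (hji : R j i) : c i = c j := by
  obtain ⟨l, hl1, hl2⟩ := List.exists_isChain_cons_of_relationReflTransGen hij
  set L : List (Fin n) := i :: l with hLdef
  have hlen : L.length = l.length + 1 := rfl
  set k := l.length with hk
  have hlt : ∀ t : Fin (k + 1), (t : ℕ) < L.length := fun t => by
    rw [hlen]; exact t.isLt
  set cyc : Fin (k + 1) → Fin n := fun t => L.get ⟨t, hlt t⟩ with hcyc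
  have hchain : (∀ h : 0 < l.length, R i (l.get ⟨0, h⟩)) ∧
      ∀ (t : ℕ) (h : t < l.length - 1), R (l.get ⟨t, by omega⟩) (l.get ⟨t + 1, by omega⟩) := by
    have := List.isChain_iff_getElem.mp hl1
    exact ⟨fun h => this 0 (by show _ < l.length + 1; omega),
      fun t h => this (t + 1) (by show _ < l.length + 1; omega)⟩
  have hgetlast : cyc (Fin.last k) = j := by
    rw [hcyc]; dsimp only
    have h0 : L.get ⟨(Fin.last k : ℕ), hlt _⟩ = L.getLast (List.cons_ne_nil _ _) := by
      have h1 := List.get_length_sub_one (l := L) (by rw [hlen]; omega)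
      have h2 : L.length - 1 = (Fin.last k : ℕ) := by rw [hlen]; simp
      simp only [h2] at h1
      exact h1
    rw [h0]
    exact hl2
  have hget0 : cyc 0 = i := rfl
  have hedge : ∀ t : Fin (k + 1), R (cyc t) (cyc (t + 1)) := by
    intro t
    by_cases hlast : t = Fin.last k
    · have h1 : cyc t = j := by rw [hlast]; exact hgetlast
      have h2 : cyc (t + 1) = i := by
        rw [hcyc]; dsimp only
        have hv : ((t + 1 : Fin (k+1)) : ℕ) = 0 := by
          rw [Fin.val_add_one, if_pos hlast]
        simp only [hv]
        rfl
      rw [h1, h2]; exact hji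
    · have htv : (t : ℕ) < k := by
        have h1 := t.isLt
        have h2 : (t : ℕ) ≠ k := fun h => hlast (Fin.ext (by simpa using h))
        omega
      have hsucc : ((t + 1 : Fin (k+1)) : ℕ) = (t : ℕ) + 1 := by
        rw [Fin.val_add_one, if_neg hlast]
      rcases Nat.eq_zero_or_pos (t : ℕ) with h0 | h0
      · have h1 : cyc t = i := by
          rw [hcyc]; dsimp only; simp only [h0]; rfl
        have h2 : cyc (t + 1) = l.get ⟨0, by omega⟩ := by
          rw [hcyc]; dsimp only; simp only [hsucc, h0]; rfl
        rw [h1, h2]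
        exact hchain.1 (by omega)
      · have h1 : cyc t = l.get ⟨(t : ℕ) - 1, by omega⟩ := by
          rw [hcyc]; dsimp only
          rcases Nat.exists_eq_add_of_lt h0 with ⟨s, hs⟩
          have hts : (t : ℕ) = s + 1 := by omega
          simp only [hts]
          rfl
        have h2 : cyc (t + 1) = l.get ⟨(t : ℕ), by omega⟩ := by
          rw [hcyc]; dsimp only; simp only [hsucc]; rfl
        rw [h1, h2]
        have h3 := hchain.2 ((t : ℕ) - 1) (by omega)
        have heq : (t : ℕ) - 1 + 1 = (t : ℕ) := by omega
        simp only [heq] at h3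
        exact h3
  have hmem : ∀ t, cyc t ∈ S := fun t => (hR _ _ (hedge t)).1
  have hE : ∀ t, E (cyc t) (cyc (t + 1)) := fun t => (hR _ _ (hedge t)).2.2
  have hc := hca2 k cyc hmem hE 0 (Fin.last k)
  rw [hget0, hgetlast] at hc
  exact hc

lemma div_of_flows {n : ℕ} (Ufin Dfin : Finset (Fin n)) (G H : Fin n → Fin n → Fin n → ℝ)
    (a₀ b₀ : Fin n) (Dc Uc : ℝ)
    (hG : ∀ u ∈ Ufin, ∀ a, ((∑ b, G u a b) - (∑ b, G u b a)) =
      (if a = u then (1:ℝ) else 0) - (if a = a₀ then 1 else 0))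
    (hH : ∀ w ∈ Dfin, ∀ a, ((∑ b, H w a b) - (∑ b, H w b a)) =
      (if a = b₀ then (1:ℝ) else 0) - (if a = w then 1 else 0))
    (hUc : Uc = Ufin.card) (hDc : Dc = Dfin.card) (a : Fin n) :
    (∑ b, ((∑ u ∈ Ufin, Dc * G u a b) + (Uc * Dc) * (if a = a₀ ∧ b = b₀ then 1 else 0)
        + ∑ w ∈ Dfin, Uc * H w a b))
      - (∑ b, ((∑ u ∈ Ufin, Dc * G u b a) + (Uc * Dc) * (if b = a₀ ∧ a = b₀ then 1 else 0)
        + ∑ w ∈ Dfin, Uc * H w b a))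
    = Dc * (if a ∈ Ufin then 1 else 0) - Uc * (if a ∈ Dfin then 1 else 0) := by
  simp only [Finset.sum_add_distrib]
  have swap1 : ∑ b, ∑ u ∈ Ufin, Dc * G u a b = ∑ u ∈ Ufin, Dc * ∑ b, G u a b := by
    rw [Finset.sum_comm]; exact Finset.sum_congr rfl fun u _ => by rw [Finset.mul_sum]
  have swap2 : ∑ b, ∑ u ∈ Ufin, Dc * G u b a = ∑ u ∈ Ufin, Dc * ∑ b, G u b a := by
    rw [Finset.sum_comm]; exact Finset.sum_congr rfl fun u _ => by rw [Finset.mul_sum]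
  have swap3 : ∑ b, ∑ w ∈ Dfin, Uc * H w a b = ∑ w ∈ Dfin, Uc * ∑ b, H w a b := by
    rw [Finset.sum_comm]; exact Finset.sum_congr rfl fun u _ => by rw [Finset.mul_sum]
  have swap4 : ∑ b, ∑ w ∈ Dfin, Uc * H w b a = ∑ w ∈ Dfin, Uc * ∑ b, H w b a := by
    rw [Finset.sum_comm]; exact Finset.sum_congr rfl fun u _ => by rw [Finset.mul_sum]
  have ind1 : ∑ b, (Uc * Dc) * (if a = a₀ ∧ b = b₀ then (1:ℝ) else 0)
      = (Uc * Dc) * (if a = a₀ then 1 else 0) := by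
    rw [← Finset.mul_sum]; congr 1; by_cases h : a = a₀ <;> simp [h]
  have ind2 : ∑ b, (Uc * Dc) * (if b = a₀ ∧ a = b₀ then (1:ℝ) else 0)
      = (Uc * Dc) * (if a = b₀ then 1 else 0) := by
    rw [← Finset.mul_sum]; congr 1; by_cases h : a = b₀ <;> simp [h]
  rw [swap1, swap2, swap3, swap4, ind1, ind2]
  have hGdiff : (∑ u ∈ Ufin, Dc * ∑ b, G u a b) - (∑ u ∈ Ufin, Dc * ∑ b, G u b a)
      = Dc * (if a ∈ Ufin then 1 else 0) - Dc * Uc * (if a = a₀ then 1 else 0) := by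
    rw [← Finset.sum_sub_distrib]
    rw [Finset.sum_congr rfl (fun u hu => by rw [← mul_sub, hG u hu a])]
    rw [← Finset.mul_sum, Finset.sum_sub_distrib, Finset.sum_const]
    have : ∑ u ∈ Ufin, (if a = u then (1:ℝ) else 0) = if a ∈ Ufin then 1 else 0 := by
      simp [Finset.sum_ite_eq]
    rw [this, hUc]
    ring
  have hHdiff : (∑ w ∈ Dfin, Uc * ∑ b, H w a b) - (∑ w ∈ Dfin, Uc * ∑ b, H w b a)
      = Uc * Dc * (if a = b₀ then 1 else 0) - Uc * (if a ∈ Dfin then 1 else 0) := by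
    rw [← Finset.sum_sub_distrib]
    rw [Finset.sum_congr rfl (fun w hw => by rw [← mul_sub, hH w hw a])]
    rw [← Finset.mul_sum, Finset.sum_sub_distrib, Finset.sum_const]
    have : ∑ w ∈ Dfin, (if a = w then (1:ℝ) else 0) = if a ∈ Dfin then 1 else 0 := by
      simp [Finset.sum_ite_eq]
    rw [this, hDc]
    ring
  linarith [hGdiff, hHdiff]

variable {n m : ℕ} (v : Fin n → Fin m → ℝ) (e : Fin n → ℝ) (p : Fin m → ℝ)
  (x : Fin n → Fin m → ℝ)

lemma spend_eq (hp : ∀ j, 0 < p j) (he : ∀ i, 0 < e i) (hV : ∀ i, 0 < _root_.val v i (x i))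
    (hK2 : ∀ i j, 0 < x i j → v i j / p j = _root_.val v i (x i) / e i)
    (hx0 : ∀ i j, 0 ≤ x i j) (u : Fin n) : ∑ j, p j * x u j = e u := by
  have key : ∀ j, v u j * x u j = (_root_.val v u (x u) / e u) * (p j * x u j) := by
    intro j
    rcases eq_or_lt_of_le (hx0 u j) with h | h
    · rw [← h]; ring
    · have h2 := hK2 u j h
      have hpj := (hp j).ne'
      field_simp at h2
      rw [h2]; ring
  have h3 : _root_.val v u (x u) = (_root_.val v u (x u) / e u) * ∑ j, p j * x u j := by
    rw [Finset.mul_sum]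
    exact Finset.sum_congr rfl fun j _ => key j
  have hVu := (hV u).ne'
  have heu := (he u).ne'
  field_simp at h3
  exact h3.symm

lemma mbb_eq (hp : ∀ j, 0 < p j) (he : ∀ i, 0 < e i)
    (hV : ∀ i, 0 < _root_.val v i (x i))
    (hK1 : ∀ i j, v i j / p j ≤ _root_.val v i (x i) / e i)
    (hK2 : ∀ i j, 0 < x i j → v i j / p j = _root_.val v i (x i) / e i)
    (hx0 : ∀ i j, 0 ≤ x i j)
    (i u : Fin n) (hval : _root_.val v i (x u) = _root_.val v i (x i)) (hee : e u = e i)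
    (j : Fin m) (hxuj : 0 < x u j) : v i j / p j = _root_.val v i (x i) / e i := by
  have hspend := spend_eq v e p x hp he hV hK2 hx0 u
  have hterm : ∀ k, 0 ≤ (_root_.val v i (x i) / e i * p k - v i k) * x u k := by
    intro k
    apply mul_nonneg _ (hx0 u k)
    have h4 := hK1 i k
    rw [div_le_div_iff₀ (hp k) (he i)] at h4
    rw [sub_nonneg, div_mul_eq_mul_div, le_div_iff₀ (he i)]
    exact h4
  have hsum : ∑ k, (_root_.val v i (x i) / e i * p k - v i k) * x u k = 0 := by
    have h6 : ∑ k, (_root_.val v i (x i) / e i * p k - v i k) * x u k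
        = (_root_.val v i (x i) / e i) * (∑ k, p k * x u k) - _root_.val v i (x u) := by
      unfold _root_.val
      rw [Finset.mul_sum, ← Finset.sum_sub_distrib]
      exact Finset.sum_congr rfl fun k _ => by ring
    rw [h6, hspend, hee, hval]
    rw [mul_comm, ← mul_div_assoc, mul_comm, mul_div_assoc, div_self (he i).ne', mul_one,
      sub_self]
  have hzero := (Finset.sum_eq_zero_iff_of_nonneg (fun k _ => hterm k)).mp hsum j
    (Finset.mem_univ j)
  have h5 : _root_.val v i (x i) / e i * p j = v i j := by
    rcases mul_eq_zero.mp hzero with h | h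
    · linarith
    · exact absurd h hxuj.ne'
  rw [div_eq_div_iff (hp j).ne' (he i).ne']
  rw [div_mul_eq_mul_div, div_eq_iff (he i).ne'] at h5
  linarith

lemma val_linear_comb (F : Fin n → Fin n → ℝ) (ε : ℝ) (i j' : Fin n) :
    _root_.val v i (fun k => x j' k + ε * ((∑ u, F j' u * x u k) - (∑ u, F u j') * x j' k)) =
      _root_.val v i (x j') + ε * ((∑ u, F j' u * _root_.val v i (x u)) - (∑ u, F u j') * _root_.val v i (x j')) := by
  unfold _root_.val
  have hswap : ∀ k, (∑ u, F j' u * (v i k * x u k)) = v i k * (∑ u, F j' u * x u k) := by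
    intro k; rw [Finset.mul_sum]; exact Finset.sum_congr rfl fun u _ => by ring
  have h1 : ∀ k, v i k * (x j' k + ε * ((∑ u, F j' u * x u k) - (∑ u, F u j') * x j' k)) =
      v i k * x j' k + ε * (∑ u, F j' u * (v i k * x u k)) -
        ε * (∑ u, F u j') * (v i k * x j' k) := fun k => by rw [hswap]; ring
  have h2 : ∑ k, (∑ u, F j' u * (v i k * x u k)) = ∑ u, F j' u * (∑ k, v i k * x u k) := by
    rw [Finset.sum_comm]
    exact Finset.sum_congr rfl fun u _ => by rw [Finset.mul_sum]
  simp only [h1]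
  rw [Finset.sum_sub_distrib, Finset.sum_add_distrib, ← Finset.mul_sum, ← Finset.mul_sum, h2]
  ring

end AuxEG

/-- Lemma 4.5: given an envy-free Eisenberg–Gale solution `(x, p)` with budgets `e` and
a weakly connected component `S` of `I(x)` on which all budgets are equal, whose
restriction to `S` is clique acyclic with identical bundles inside cliques and with at
least one edge between distinct cliques, there are new budgets `e'` and a new
allocation `x'`, agreeing with `e` and `x` outside `S`, such that `(x', p)` solves the
Eisenberg–Gale program with budgets `e'`, `x'` is envy-free, no new indifference edges
are created, `I(x')` has strictly fewer edges than `I(x)`, and the restriction of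
`I(x')` to `S` has at least two weakly connected components, on each of which the
budgets `e'` are constant. -/

theorem EG_budget_change_splits_component (n m : ℕ) (v : Fin n → Fin m → ℝ)
    (hv : ∀ i k, 0 ≤ v i k)
    (e : Fin n → ℝ) (p : Fin m → ℝ) (x : Fin n → Fin m → ℝ)
    (hEG : EGSolution v e p x) (hEF : EnvyFree v x)
    (S : Set (Fin n)) (hS : IsWCC v x S)
    (hbudget : ∀ i ∈ S, ∀ j ∈ S, e i = e j)
    (c : Fin n → ℕ)
    (hca : CliqueAcyclicOn (IndifEdge v x) S c)
    (hsame : ∀ i ∈ S, ∀ j ∈ S, c i = c j → x i = x j)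
    (hedge : ∃ i ∈ S, ∃ j ∈ S, IndifEdge v x i j ∧ c i ≠ c j) :
    ∃ (e' : Fin n → ℝ) (x' : Fin n → Fin m → ℝ),
      (∀ i, 0 < e' i) ∧
      (∀ i ∉ S, e' i = e i ∧ x' i = x i) ∧
      EGSolution v e' p x' ∧
      EnvyFree v x' ∧
      (∀ i j, IndifEdge v x' i j → IndifEdge v x i j) ∧
      Nat.card {q : Fin n × Fin n // IndifEdge v x' q.1 q.2} <
        Nat.card {q : Fin n × Fin n // IndifEdge v x q.1 q.2} ∧
      (∃ i ∈ S, ∃ j ∈ S, ¬ Relation.ReflTransGen (RestrStep v x' S) i j) ∧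
      (∀ i ∈ S, ∀ j : Fin n, Relation.ReflTransGen (RestrStep v x' S) i j →
        e' i = e' j) := by
  classical
  obtain ⟨he, hp, ⟨hx01, hxcol⟩, hV, hxcol', hK1, hK2⟩ := hEG
  obtain ⟨a₀, ha₀S, b₀, hb₀S, hab, hcab⟩ := hedge
  obtain ⟨i₀, hSeq⟩ := hS
  have hx0 : ∀ i j, 0 ≤ x i j := fun i j => (hx01 i j).1
  have hSfwd : ∀ {i j}, i ∈ S → IndifEdge v x i j → j ∈ S := by
    intro i j hi hij
    rw [hSeq] at hi ⊢
    exact hi.tail (Or.inl hij)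
  have hSbwd : ∀ {i j}, j ∈ S → IndifEdge v x i j → i ∈ S := by
    intro i j hj hij
    rw [hSeq] at hj ⊢
    exact hj.tail (Or.inr hij)
  set E' : Fin n → Fin n → Prop := fun i j => i ∈ S ∧ j ∈ S ∧ IndifEdge v x i j with hE'def
  have hRelS : ∀ {i j}, Relation.ReflTransGen E' i j → i = j ∨ (i ∈ S ∧ j ∈ S) := by
    intro i j h
    induction h with
    | refl => exact Or.inl rfl
    | @tail b j hib hbj ih =>
      right
      refine ⟨?_, hbj.2.1⟩
      rcases ih with rfl | h'
      · exact hbj.1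
      · exact h'.1
  have hkey : ¬ Relation.ReflTransGen E' b₀ a₀ := by
    intro h
    have hcyc := c_eq_of_cycle hca.2 (R := E')
      (fun a b h' => ⟨h'.1, h'.2.1, h'.2.2⟩) h ⟨ha₀S, hb₀S, hab⟩
    exact hcab hcyc.symm
  set Ufin : Finset (Fin n) := Finset.univ.filter (fun u => Relation.ReflTransGen E' u a₀)
    with hUdef
  set Dfin : Finset (Fin n) := Finset.univ.filter (fun w => Relation.ReflTransGen E' b₀ w)
    with hDdef
  have hUmem : ∀ a, a ∈ Ufin ↔ Relation.ReflTransGen E' a a₀ := by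
    intro a; rw [hUdef]; simp
  have hDmem : ∀ a, a ∈ Dfin ↔ Relation.ReflTransGen E' b₀ a := by
    intro a; rw [hDdef]; simp
  have ha₀U : a₀ ∈ Ufin := (hUmem a₀).mpr Relation.ReflTransGen.refl
  have hb₀D : b₀ ∈ Dfin := (hDmem b₀).mpr Relation.ReflTransGen.refl
  have hb₀U : b₀ ∉ Ufin := fun h => hkey ((hUmem b₀).mp h)
  have hUDdisj : ∀ a, a ∈ Ufin → a ∈ Dfin → False := fun a hu hd =>
    hkey (((hDmem a).mp hd).trans ((hUmem a).mp hu))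
  have hUS : ∀ a ∈ Ufin, a ∈ S := by
    intro a ha
    rcases hRelS ((hUmem a).mp ha) with rfl | h'
    · exact ha₀S
    · exact h'.1
  have hDS : ∀ a ∈ Dfin, a ∈ S := by
    intro a ha
    rcases hRelS ((hDmem a).mp ha) with h' | h'
    · rw [← h']; exact hb₀S
    · exact h'.2
  set Uc : ℝ := (Ufin.card : ℝ) with hUcdef
  set Dc : ℝ := (Dfin.card : ℝ) with hDcdef
  have hUcpos : 0 < Uc := by
    rw [hUcdef]; exact_mod_cast Finset.card_pos.mpr ⟨a₀, ha₀U⟩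
  have hDcpos : 0 < Dc := by
    rw [hDcdef]; exact_mod_cast Finset.card_pos.mpr ⟨b₀, hb₀D⟩
  set d : Fin n → ℝ := fun a => if a ∈ Ufin then Dc else if a ∈ Dfin then -Uc else 0
    with hddef
  have hd_a₀ : d a₀ = Dc := by rw [hddef]; simp [ha₀U]
  have hd_b₀ : d b₀ = -Uc := by rw [hddef]; simp [hb₀U, hb₀D]
  have hdU : ∀ a, a ∈ Ufin → d a = Dc := by
    intro a ha; rw [hddef]; dsimp only; rw [if_pos ha]
  have hdD : ∀ a, a ∉ Ufin → a ∈ Dfin → d a = -Uc := by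
    intro a ha hd'; rw [hddef]; dsimp only; rw [if_neg ha, if_pos hd']
  have hd0 : ∀ a, a ∉ Ufin → a ∉ Dfin → d a = 0 := by
    intro a ha hd'; rw [hddef]; dsimp only; rw [if_neg ha, if_neg hd']
  have hdcases : ∀ a, d a = Dc ∨ d a = -Uc ∨ d a = 0 := by
    intro a
    by_cases h1 : a ∈ Ufin
    · exact Or.inl (hdU a h1)
    · by_cases h2 : a ∈ Dfin
      · exact Or.inr (Or.inl (hdD a h1 h2))
      · exact Or.inr (Or.inr (hd0 a h1 h2))
  have hd_mono : ∀ a b, E' a b → d b ≤ d a := by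
    intro a b hE
    have hUclosed : b ∈ Ufin → a ∈ Ufin := fun hb =>
      (hUmem a).mpr (Relation.ReflTransGen.head hE ((hUmem b).mp hb))
    have hDclosed : a ∈ Dfin → b ∈ Dfin := fun ha =>
      (hDmem b).mpr (((hDmem a).mp ha).tail hE)
    by_cases hbU : b ∈ Ufin
    · rw [hdU b hbU, hdU a (hUclosed hbU)]
    · by_cases haU : a ∈ Ufin
      · rw [hdU a haU]
        rcases hdcases b with h | h | h <;> rw [h] <;> linarith
      · by_cases haD : a ∈ Dfin
        · rw [hdD a haU haD, hdD b hbU (hDclosed haD)]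
        · rw [hd0 a haU haD]
          by_cases hbD : b ∈ Dfin
          · rw [hdD b hbU hbD]; linarith
          · rw [hd0 b hbU hbD]
  have hd_out : ∀ a, a ∉ S → d a = 0 := by
    intro a haS
    refine hd0 a (fun h => haS (hUS a h)) (fun h => haS (hDS a h))
  set G : Fin n → Fin n → Fin n → ℝ :=
    fun u => if h : Relation.ReflTransGen E' u a₀ then (flow_of_rel h).choose else 0 with hGdef
  set H : Fin n → Fin n → Fin n → ℝ :=
    fun w => if h : Relation.ReflTransGen E' b₀ w then (flow_of_rel h).choose else 0 with hHdef
  have hGspec : ∀ u ∈ Ufin, (∀ a b, 0 ≤ G u a b) ∧ (∀ a b, ¬ E' a b → G u a b = 0) ∧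
      ∀ a, ((∑ b, G u a b) - (∑ b, G u b a)) =
        (if a = u then (1:ℝ) else 0) - (if a = a₀ then 1 else 0) := by
    intro u hu
    have h := (hUmem u).mp hu
    rw [hGdef]
    dsimp only
    rw [dif_pos h]
    exact (flow_of_rel h).choose_spec
  have hHspec : ∀ w ∈ Dfin, (∀ a b, 0 ≤ H w a b) ∧ (∀ a b, ¬ E' a b → H w a b = 0) ∧
      ∀ a, ((∑ b, H w a b) - (∑ b, H w b a)) =
        (if a = b₀ then (1:ℝ) else 0) - (if a = w then 1 else 0) := by
    intro w hw
    have h := (hDmem w).mp hw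
    rw [hHdef]
    dsimp only
    rw [dif_pos h]
    exact (flow_of_rel h).choose_spec
  set F : Fin n → Fin n → ℝ := fun a b =>
    (∑ u ∈ Ufin, Dc * G u a b) + (Uc * Dc) * (if a = a₀ ∧ b = b₀ then 1 else 0)
      + ∑ w ∈ Dfin, Uc * H w a b with hFdef
  have hF0 : ∀ a b, 0 ≤ F a b := by
    intro a b
    rw [hFdef]; dsimp only
    have t1 : 0 ≤ ∑ u ∈ Ufin, Dc * G u a b :=
      Finset.sum_nonneg fun u hu => mul_nonneg hDcpos.le ((hGspec u hu).1 a b)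
    have t2 : (0:ℝ) ≤ (Uc * Dc) * (if a = a₀ ∧ b = b₀ then 1 else 0) := by
      apply mul_nonneg (mul_nonneg hUcpos.le hDcpos.le)
      split <;> norm_num
    have t3 : 0 ≤ ∑ w ∈ Dfin, Uc * H w a b :=
      Finset.sum_nonneg fun w hw => mul_nonneg hUcpos.le ((hHspec w hw).1 a b)
    linarith
  have hFsupp : ∀ a b, ¬ E' a b → F a b = 0 := by
    intro a b hn
    rw [hFdef]; dsimp only
    have t1 : ∑ u ∈ Ufin, Dc * G u a b = 0 :=
      Finset.sum_eq_zero fun u hu => by rw [(hGspec u hu).2.1 a b hn, mul_zero]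
    have t2 : (if a = a₀ ∧ b = b₀ then (1:ℝ) else 0) = 0 := by
      rw [if_neg]
      rintro ⟨rfl, rfl⟩; exact hn ⟨ha₀S, hb₀S, hab⟩
    have t3 : ∑ w ∈ Dfin, Uc * H w a b = 0 :=
      Finset.sum_eq_zero fun w hw => by rw [(hHspec w hw).2.1 a b hn, mul_zero]
    rw [t1, t2, t3, mul_zero]
    ring
  have hFdiv : ∀ a, ((∑ b, F a b) - (∑ b, F b a)) = d a := by
    intro a
    simp only [hFdef]
    rw [div_of_flows Ufin Dfin G H a₀ b₀ Dc Uc (fun u hu => (hGspec u hu).2.2)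
      (fun w hw => (hHspec w hw).2.2) hUcdef hDcdef a]
    by_cases h1 : a ∈ Ufin
    · rw [hdU a h1, if_pos h1, if_neg (fun h => hUDdisj a h1 h)]
      ring
    · rw [if_neg h1]
      by_cases h2 : a ∈ Dfin
      · rw [hdD a h1 h2, if_pos h2]; ring
      · rw [hd0 a h1 h2, if_neg h2]; ring
  have hFedge : ∀ i u, F i u ≠ 0 → E' i u := by
    intro i u h
    by_contra hn
    exact h (hFsupp i u hn)
  have hFval : ∀ i u, F i u ≠ 0 → val v i (x u) = val v i (x i) := fun i u h =>
    ((hFedge i u h).2.2.2).symm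
  have hmbb : ∀ i u, i ∈ S → u ∈ S → val v i (x u) = val v i (x i) →
      ∀ j, 0 < x u j → v i j / p j = val v i (x i) / e i := fun i u hiS huS hvalu j hx =>
    mbb_eq v e p x hp he hV hK1 hK2 hx0 i u hvalu (hbudget u huS i hiS) j hx
  set xp : ℝ → Fin n → Fin m → ℝ :=
    fun ε i j => x i j + ε * ((∑ u, F i u * x u j) - (∑ u, F u i) * x i j) with hxpdef
  set ep : ℝ → Fin n → ℝ := fun ε i => e i * (1 + ε * d i) with hepdef
  have hvalxp : ∀ ε i j', val v i (xp ε j') = val v i (x j')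
      + ε * ((∑ u, F j' u * val v i (x u)) - (∑ u, F u j') * val v i (x j')) := by
    intro ε i j'
    have hx' : xp ε j' = fun k => x j' k + ε * ((∑ u, F j' u * x u k) - (∑ u, F u j') * x j' k) := by
      rw [hxpdef]
    rw [hx', val_linear_comb]
  have houtflow : ∀ i, (∑ u, F i u * val v i (x u)) = (∑ u, F i u) * val v i (x i) := by
    intro i
    rw [Finset.sum_mul]
    refine Finset.sum_congr rfl fun u _ => ?_
    rcases eq_or_ne (F i u) 0 with h | h
    · rw [h, zero_mul, zero_mul]
    · rw [hFval i u h]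
  have hvalself : ∀ ε i, val v i (xp ε i) = val v i (x i) * (1 + ε * d i) := by
    intro ε i
    rw [hvalxp, houtflow, ← hFdiv i]
    ring
  have hvalbound : ∀ ε i j', 0 ≤ ε → ε * (∑ u, F u j') ≤ 1 →
      val v i (xp ε j') ≤ val v i (x i) * (1 + ε * d j') := by
    intro ε i j' hε hεs
    rw [hvalxp, ← hFdiv j']
    have h1 : (∑ u, F j' u * val v i (x u)) ≤ (∑ u, F j' u) * val v i (x i) := by
      rw [Finset.sum_mul]
      exact Finset.sum_le_sum fun u _ => mul_le_mul_of_nonneg_left (hEF i u) (hF0 j' u)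
    have h2 : val v i (x j') ≤ val v i (x i) := hEF i j'
    have h3 : 0 ≤ 1 - ε * (∑ u, F u j') := by linarith
    nlinarith [mul_le_mul_of_nonneg_right h2 h3, mul_le_mul_of_nonneg_left h1 hε]
  obtain ⟨ε, hε, hεσ, hεd, hεstrict⟩ : ∃ ε : ℝ, 0 < ε ∧ (∀ i, ε * (∑ u, F u i) ≤ 1) ∧
      (∀ i, 0 < 1 + ε * d i) ∧
      (∀ i j', val v i (x j') < val v i (x i) →
        val v i (xp ε j') < val v i (xp ε i)) := by
    have h1 : ∀ᶠ ε : ℝ in nhdsWithin 0 (Set.Ioi 0), 0 < ε :=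
      Filter.eventually_of_mem self_mem_nhdsWithin fun ε hε => hε
    have h2 : ∀ i : Fin n, ∀ᶠ ε : ℝ in nhds 0, ε * (∑ u, F u i) ≤ 1 := by
      intro i
      have ht : Filter.Tendsto (fun ε : ℝ => ε * (∑ u, F u i)) (nhds 0)
          (nhds (0 * (∑ u, F u i))) := Filter.Tendsto.mul_const _ Filter.tendsto_id
      have h0 : (0:ℝ) * (∑ u, F u i) < 1 := by norm_num
      exact (ht.eventually_lt_const h0).mono fun ε h => h.le
    have h3 : ∀ i : Fin n, ∀ᶠ ε : ℝ in nhds 0, 0 < 1 + ε * d i := by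
      intro i
      have ht : Filter.Tendsto (fun ε : ℝ => 1 + ε * d i) (nhds 0)
          (nhds (1 + 0 * d i)) :=
        Filter.Tendsto.add tendsto_const_nhds (Filter.Tendsto.mul_const _ Filter.tendsto_id)
      exact ht.eventually_const_lt (by norm_num)
    have h4 : ∀ q : Fin n × Fin n, ∀ᶠ ε : ℝ in nhds 0,
        (val v q.1 (x q.2) < val v q.1 (x q.1) →
          val v q.1 (xp ε q.2) < val v q.1 (xp ε q.1)) := by
      intro q
      by_cases hq : val v q.1 (x q.2) < val v q.1 (x q.1)
      · have ht : Filter.Tendsto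
            (fun ε : ℝ => val v q.1 (xp ε q.2) - val v q.1 (xp ε q.1)) (nhds 0)
            (nhds (val v q.1 (x q.2) - val v q.1 (x q.1))) := by
          simp only [hvalxp]
          have htt : Filter.Tendsto (fun ε : ℝ =>
              (val v q.1 (x q.2) + ε * ((∑ u, F q.2 u * val v q.1 (x u))
                - (∑ u, F u q.2) * val v q.1 (x q.2)))
              - (val v q.1 (x q.1) + ε * ((∑ u, F q.1 u * val v q.1 (x u))
                - (∑ u, F u q.1) * val v q.1 (x q.1)))) (nhds 0)
              (nhds ((val v q.1 (x q.2) + 0 * ((∑ u, F q.2 u * val v q.1 (x u))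
                - (∑ u, F u q.2) * val v q.1 (x q.2)))
              - (val v q.1 (x q.1) + 0 * ((∑ u, F q.1 u * val v q.1 (x u))
                - (∑ u, F u q.1) * val v q.1 (x q.1))))) := by
            apply Filter.Tendsto.sub <;>
              exact Filter.Tendsto.add tendsto_const_nhds
                (Filter.Tendsto.mul_const _ Filter.tendsto_id)
          simpa using htt
        have hlt : val v q.1 (x q.2) - val v q.1 (x q.1) < 0 := by linarith
        exact (ht.eventually_lt_const hlt).mono fun ε h _ => by linarith
      · exact Filter.Eventually.of_forall fun ε h => absurd h hq
    have hall : ∀ᶠ ε : ℝ in nhdsWithin 0 (Set.Ioi 0), 0 < ε ∧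
        (∀ i, ε * (∑ u, F u i) ≤ 1) ∧ (∀ i, 0 < 1 + ε * d i) ∧
        (∀ q : Fin n × Fin n, val v q.1 (x q.2) < val v q.1 (x q.1) →
          val v q.1 (xp ε q.2) < val v q.1 (xp ε q.1)) := by
      refine h1.and (Filter.Eventually.filter_mono nhdsWithin_le_nhds ?_)
      exact (Filter.eventually_all.mpr h2).and ((Filter.eventually_all.mpr h3).and
        (Filter.eventually_all.mpr h4))
    obtain ⟨ε, hε1, hε2, hε3, hε4⟩ := hall.exists
    exact ⟨ε, hε1, hε2, hε3, fun i j' => hε4 (i, j')⟩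
  have hratio : ∀ i, val v i (xp ε i) / ep ε i = val v i (x i) / e i := by
    intro i
    rw [hvalself, hepdef]
    dsimp only
    rw [mul_div_mul_right _ _ (hεd i).ne']
  have hVpos' : ∀ i, 0 < val v i (xp ε i) := fun i => by
    rw [hvalself]; exact mul_pos (hV i) (hεd i)
  have hepos : ∀ i, 0 < ep ε i := fun i => by
    rw [hepdef]; exact mul_pos (he i) (hεd i)
  have hxp_expand : ∀ i j, xp ε i j
      = x i j * (1 - ε * (∑ u, F u i)) + ε * (∑ u, F i u * x u j) := by
    intro i j; rw [hxpdef]; dsimp only; ring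
  have hxp0 : ∀ i j, 0 ≤ xp ε i j := by
    intro i j
    rw [hxp_expand]
    have t1 : 0 ≤ x i j * (1 - ε * (∑ u, F u i)) :=
      mul_nonneg (hx0 i j) (by linarith [hεσ i])
    have t2 : 0 ≤ ∑ u, F i u * x u j :=
      Finset.sum_nonneg fun u _ => mul_nonneg (hF0 i u) (hx0 u j)
    have t3 := mul_nonneg hε.le t2
    linarith
  have hcolxp : ∀ j, ∑ i, xp ε i j = 1 := by
    intro j
    have hswap : ∑ i, ∑ u, F i u * x u j = ∑ i, (∑ u, F u i) * x i j := by
      rw [Finset.sum_comm]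
      exact Finset.sum_congr rfl fun u _ => by rw [← Finset.sum_mul]
    simp only [hxpdef]
    rw [Finset.sum_add_distrib, hxcol j, ← Finset.mul_sum, Finset.sum_sub_distrib, hswap,
      sub_self, mul_zero, add_zero]
  have hxp1 : ∀ i j, xp ε i j ≤ 1 := by
    intro i j
    have h := hcolxp j
    have h2 : xp ε i j ≤ ∑ i', xp ε i' j :=
      Finset.single_le_sum (fun i' _ => hxp0 i' j) (Finset.mem_univ i)
    linarith
  have houtSx : ∀ i, i ∉ S → xp ε i = x i ∧ ep ε i = e i := by
    intro i hiS
    have hFrow : ∀ u, F i u = 0 := fun u => by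
      by_contra h; exact hiS (hFedge i u h).1
    have hFcol : ∀ u, F u i = 0 := fun u => by
      by_contra h; exact hiS (hFedge u i h).2.1
    constructor
    · funext j
      show xp ε i j = x i j
      have hs1 : (∑ u, F i u * x u j) = 0 :=
        Finset.sum_eq_zero fun u _ => by rw [hFrow u, zero_mul]
      have hs2 : (∑ u, F u i) = 0 := Finset.sum_eq_zero fun u _ => hFcol u
      rw [hxp_expand, hs1, hs2]
      ring
    · rw [hepdef]; dsimp only; rw [hd_out i hiS]; ring
  have hK1' : ∀ i j, v i j / p j ≤ val v i (xp ε i) / ep ε i := by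
    intro i j; rw [hratio]; exact hK1 i j
  have hK2' : ∀ i j, 0 < xp ε i j → v i j / p j = val v i (xp ε i) / ep ε i := by
    intro i j hpos
    rw [hratio]
    by_cases hx' : 0 < x i j
    · exact hK2 i j hx'
    · have hxij : x i j = 0 := le_antisymm (not_lt.mp hx') (hx0 i j)
      rw [hxp_expand, hxij] at hpos
      have hexu : ∃ u, 0 < F i u * x u j := by
        by_contra hno
        push_neg at hno
        have hs : ∑ u, F i u * x u j ≤ 0 := Finset.sum_nonpos fun u _ => hno u
        nlinarith
      obtain ⟨u, hu⟩ := hexu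
      have hFu : F i u ≠ 0 := by
        intro h; rw [h, zero_mul] at hu; exact lt_irrefl 0 hu
      have hxuj : 0 < x u j := by
        rcases (hx0 u j).lt_or_eq with h | h
        · exact h
        · rw [← h, mul_zero] at hu; exact absurd hu (lt_irrefl 0)
      have hEi := hFedge i u hFu
      exact hmbb i u hEi.1 hEi.2.1 (hFval i u hFu) j hxuj
  have hdle : ∀ i j', val v i (x j') = val v i (x i) → d j' ≤ d i := by
    intro i j' heq
    rcases eq_or_ne i j' with rfl | hne
    · exact le_refl _
    · have hedge' : IndifEdge v x i j' := ⟨hne, heq.symm⟩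
      by_cases hiS : i ∈ S
      · exact hd_mono i j' ⟨hiS, hSfwd hiS hedge', hedge'⟩
      · have hj'S : j' ∉ S := fun hj => hiS (hSbwd hj hedge')
        rw [hd_out i hiS, hd_out j' hj'S]
  have hEF' : EnvyFree v (xp ε) := by
    intro i j'
    by_cases hlt : val v i (x j') < val v i (x i)
    · exact (hεstrict i j' hlt).le
    · have heq : val v i (x j') = val v i (x i) := le_antisymm (hEF i j') (not_lt.mp hlt)
      have hd' : d j' ≤ d i := hdle i j' heq
      calc val v i (xp ε j') ≤ val v i (x i) * (1 + ε * d j') :=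
            hvalbound ε i j' hε.le (hεσ j')
        _ ≤ val v i (x i) * (1 + ε * d i) := by
            apply mul_le_mul_of_nonneg_left _ (hV i).le
            nlinarith
        _ = val v i (xp ε i) := (hvalself ε i).symm
  have hsub : ∀ i j', IndifEdge v (xp ε) i j' → IndifEdge v x i j' := by
    rintro i j' ⟨hne, heqp⟩
    refine ⟨hne, ?_⟩
    by_contra hneq
    have hlt : val v i (x j') < val v i (x i) :=
      lt_of_le_of_ne (hEF i j') fun h => hneq h.symm
    exact (hεstrict i j' hlt).ne' heqp
  have hdeq : ∀ a b, a ∈ S → b ∈ S → IndifEdge v (xp ε) a b → d a = d b := by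
    intro a b haS hbS hedge'
    have hold := hsub a b hedge'
    have h1 : d b ≤ d a := hd_mono a b ⟨haS, hbS, hold⟩
    have h2 : val v a (xp ε a) = val v a (xp ε b) := hedge'.2
    have h3 : val v a (xp ε b) ≤ val v a (x a) * (1 + ε * d b) :=
      hvalbound ε a b hε.le (hεσ b)
    rw [hvalself] at h2
    have h4 : val v a (x a) * (1 + ε * d a) ≤ val v a (x a) * (1 + ε * d b) :=
      le_trans (le_of_eq h2) h3
    have h6 := (mul_le_mul_iff_right₀ (hV a)).mp h4
    have h7 := (mul_le_mul_iff_right₀ hε).mp (by linarith : ε * d a ≤ ε * d b)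
    linarith
  have hstep : ∀ a b, RestrStep v (xp ε) S a b → d a = d b := by
    rintro a b ⟨haS, hbS, hor⟩
    rcases hor with h | h
    · exact hdeq a b haS hbS h
    · exact (hdeq b a hbS haS h).symm
  have hrtg : ∀ i j', Relation.ReflTransGen (RestrStep v (xp ε) S) i j' →
      d i = d j' ∧ (i = j' ∨ j' ∈ S) := by
    intro i j' h
    induction h with
    | refl => exact ⟨rfl, Or.inl rfl⟩
    | @tail b j'' hib hbj ih =>
      exact ⟨ih.1.trans (hstep b j'' hbj), Or.inr hbj.2.1⟩
  refine ⟨ep ε, xp ε, hepos, fun i hiS => ⟨(houtSx i hiS).2, (houtSx i hiS).1⟩,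
    ⟨hepos, hp, ⟨fun i j => ⟨hxp0 i j, hxp1 i j⟩, hcolxp⟩, hVpos', hcolxp, hK1', hK2'⟩,
    hEF', hsub, ?_, ⟨a₀, ha₀S, b₀, hb₀S, ?_⟩, ?_⟩
  · have hnotnew : ¬ IndifEdge v (xp ε) a₀ b₀ := by
      rintro ⟨hne, heqp⟩
      have h3 : val v a₀ (xp ε b₀) ≤ val v a₀ (x a₀) * (1 + ε * d b₀) :=
        hvalbound ε a₀ b₀ hε.le (hεσ b₀)
      have h4 : val v a₀ (xp ε a₀) = val v a₀ (x a₀) * (1 + ε * d a₀) := hvalself ε a₀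
      rw [hd_a₀] at h4
      rw [hd_b₀] at h3
      rw [heqp] at h4
      rw [h4] at h3
      have h6 := (mul_le_mul_iff_right₀ (hV a₀)).mp h3
      have h7 := mul_pos hε hDcpos
      have h8 := mul_pos hε hUcpos
      linarith
    have hc1 : Nat.card {q : Fin n × Fin n // IndifEdge v (xp ε) q.1 q.2}
        = Set.ncard {q : Fin n × Fin n | IndifEdge v (xp ε) q.1 q.2} :=
      Nat.card_coe_set_eq _
    have hc2 : Nat.card {q : Fin n × Fin n // IndifEdge v x q.1 q.2}
        = Set.ncard {q : Fin n × Fin n | IndifEdge v x q.1 q.2} :=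
      Nat.card_coe_set_eq _
    rw [hc1, hc2]
    apply Set.ncard_lt_ncard _ (Set.toFinite _)
    rw [Set.ssubset_iff_of_subset (fun q hq => hsub q.1 q.2 hq)]
    exact ⟨(a₀, b₀), hab, hnotnew⟩
  · intro h
    have hd' := (hrtg a₀ b₀ h).1
    rw [hd_a₀, hd_b₀] at hd'
    linarith
  · intro i hiS j' h
    obtain ⟨hd', hj⟩ := hrtg i j' h
    rcases hj with rfl | hj'S
    · rfl
    · rw [hepdef]; dsimp only; rw [hbudget i hiS j' hj'S, hd']
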